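/- Suppose G₁, G₂ are finite abelian groups, H is a subgroup of G₁, there is a strong frame starter in G₁ \ H, a strong frame starter in (H × G₂) \ (H × {0}), and a strong complete mapping of G₂. Then there is a strong frame starter in (G₁ × G₂) \ (H × {0}). -/

import Mathlib

open scoped Classical

variable {G : Type*} [AddCommGroup G]

/-- The multiset of all elements appearing in the pairs of `S`. -/
def starterElems (S : Finset (G × G)) : Multiset G :=
  S.val.bind fun p => {p.1, p.2}

/-- The multiset of all differences `±(x - y)` arising from the pairs of `S`. -/
def starterDiffs (S : Finset (G × G)) : Multiset G :=
  S.val.bind fun p => {p.1 - p.2, p.2 - p.1}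

/-- `S` is a frame starter in `G \ H`: its pairs partition `G \ H` and its
differences `±(x - y)` enumerate each element of `G \ H` exactly once. -/
def IsFrameStarter (H : AddSubgroup G) (S : Finset (G × G)) : Prop :=
  (∀ z : G, (starterElems S).count z = if z ∈ H then 0 else 1) ∧
  (∀ z : G, (starterDiffs S).count z = if z ∈ H then 0 else 1)

/-- A frame starter is strong if the pair sums are pairwise distinct and avoid `H`. -/
def IsStrongFrameStarter (H : AddSubgroup G) (S : Finset (G × G)) : Prop :=
  IsFrameStarter H S ∧
  (∀ p ∈ S, p.1 + p.2 ∉ H) ∧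
  (∀ p ∈ S, ∀ q ∈ S, p.1 + p.2 = q.1 + q.2 → p = q)

/-- A strong complete mapping of an abelian group. -/
def IsStrongCompleteMapping {A : Type*} [AddCommGroup A] (φ : A → A) : Prop :=
  Function.Bijective φ ∧ Function.Bijective (fun x => φ x - x) ∧
    Function.Bijective (fun x => φ x + x)

lemma count_pair' {α : Type*} (z x y : α) :
    (({x, y} : Multiset α)).count z = (if z = x then 1 else 0) + (if z = y then 1 else 0) := by
  simp [Multiset.insert_eq_cons, Multiset.count_cons, Multiset.count_singleton, add_comm]

lemma count_map_univ_pair {β γ : Type*} [Fintype β]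
    (c : γ) (ψ : β → β) (hψ : Function.Bijective ψ) (z : γ × β) :
    ((Finset.univ.val : Multiset β).map fun a => (c, ψ a)).count z
      = if z.1 = c then 1 else 0 := by
  split_ifs with h
  · obtain ⟨a, ha⟩ := hψ.surjective z.2
    have hz : z = (fun a => (c, ψ a)) a := by
      ext
      · exact h
      · exact ha.symm
    have hinj : Function.Injective (fun a : β => (c, ψ a)) := fun x y hxy =>
      hψ.injective (congrArg Prod.snd hxy)
    rw [hz]
    exact (Multiset.count_map_eq_count' _ _ hinj a).trans (Multiset.count_univ a)
  · rw [Multiset.count_eq_zero]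
    intro hmem
    obtain ⟨a, _, ha⟩ := Multiset.mem_map.mp hmem
    exact h (by rw [← ha])

lemma count_bind_univ_pair {β γ : Type*} [Fintype β]
    (c₁ c₂ : γ) (ψ₁ ψ₂ : β → β) (h₁ : Function.Bijective ψ₁) (h₂ : Function.Bijective ψ₂)
    (z : γ × β) :
    ((Finset.univ.val : Multiset β).bind
        fun a => ({(c₁, ψ₁ a), (c₂, ψ₂ a)} : Multiset (γ × β))).count z
      = (({c₁, c₂} : Multiset γ)).count z.1 := by
  have hsplit : (fun a : β => ({(c₁, ψ₁ a), (c₂, ψ₂ a)} : Multiset (γ × β)))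
      = fun a => ({(c₁, ψ₁ a)} : Multiset (γ × β)) + {(c₂, ψ₂ a)} := by
    funext a; rfl
  rw [hsplit, Multiset.bind_add, Multiset.bind_singleton, Multiset.bind_singleton,
    Multiset.count_add, count_map_univ_pair c₁ ψ₁ h₁ z, count_map_univ_pair c₂ ψ₂ h₂ z,
    count_pair']

theorem stmt_13 {G₁ G₂ : Type*} [AddCommGroup G₁] [AddCommGroup G₂]
    [Fintype G₁] [Fintype G₂] (H : AddSubgroup G₁)
    (hS₁ : ∃ S : Finset (G₁ × G₁), IsStrongFrameStarter H S)
    (hS₂ : ∃ S : Finset ((H × G₂) × (H × G₂)),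
      IsStrongFrameStarter ((⊤ : AddSubgroup H).prod (⊥ : AddSubgroup G₂)) S)
    (hφ : ∃ φ : G₂ → G₂, IsStrongCompleteMapping φ) :
    ∃ S' : Finset ((G₁ × G₂) × (G₁ × G₂)),
      IsStrongFrameStarter (H.prod (⊥ : AddSubgroup G₂)) S' := by
  classical
  obtain ⟨S₁, ⟨⟨h₁e, h₁d⟩, h₁sH, h₁inj⟩⟩ := hS₁
  obtain ⟨S₂, ⟨⟨h₂e, h₂d⟩, h₂sH, h₂inj⟩⟩ := hS₂
  obtain ⟨φ, hφb, hφd, hφs⟩ := hφ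
  set ι : H × G₂ → G₁ × G₂ := fun q => ((q.1 : G₁), q.2) with hι
  have ιinj : Function.Injective ι := by
    intro a b hab
    have h1 := congrArg Prod.fst hab
    have h2 := congrArg Prod.snd hab
    ext
    · exact h1
    · exact h2
  have ψneg : Function.Bijective (fun a : G₂ => a - φ a) := by
    have : (fun a : G₂ => a - φ a) = (fun x : G₂ => -x) ∘ (fun a => φ a - a) := by
      funext a; simp
    rw [this]
    exact (neg_involutive (G := G₂)).bijective.comp hφd
  set F : (G₁ × G₁) → G₂ → ((G₁ × G₂) × (G₁ × G₂)) :=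
    fun p a => ((p.1, φ a), (p.2, a)) with hF
  set A : Multiset ((G₁ × G₂) × (G₁ × G₂)) :=
    S₁.val.bind fun p => Finset.univ.val.map (F p) with hA
  set B : Multiset ((G₁ × G₂) × (G₁ × G₂)) :=
    S₂.val.map (fun q => (ι q.1, ι q.2)) with hB
  set M : Multiset ((G₁ × G₂) × (G₁ × G₂)) := A + B with hM
  -- counts for part A
  have hAE : ∀ z : G₁ × G₂, (A.bind fun e => ({e.1, e.2} : Multiset (G₁ × G₂))).count z
      = (starterElems S₁).count z.1 := by
    intro z
    rw [hA, Multiset.bind_assoc]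
    have key : ∀ p ∈ S₁.val,
        ((Finset.univ.val.map (F p)).bind
          fun e => ({e.1, e.2} : Multiset (G₁ × G₂))).count z
        = (({p.1, p.2} : Multiset G₁)).count z.1 := by
      intro p _
      rw [Multiset.bind_map]
      exact count_bind_univ_pair p.1 p.2 φ (fun a => a) hφb Function.bijective_id z
    rw [Multiset.count_bind, Multiset.map_congr rfl key, ← Multiset.count_bind]
    rfl
  have hAD : ∀ z : G₁ × G₂, (A.bind fun e => ({e.1 - e.2, e.2 - e.1} : Multiset (G₁ × G₂))).count z
      = (starterDiffs S₁).count z.1 := by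
    intro z
    rw [hA, Multiset.bind_assoc]
    have key : ∀ p ∈ S₁.val,
        ((Finset.univ.val.map (F p)).bind
          fun e => ({e.1 - e.2, e.2 - e.1} : Multiset (G₁ × G₂))).count z
        = (({p.1 - p.2, p.2 - p.1} : Multiset G₁)).count z.1 := by
      intro p _
      rw [Multiset.bind_map]
      exact count_bind_univ_pair (p.1 - p.2) (p.2 - p.1) (fun a => φ a - a)
        (fun a => a - φ a) hφd ψneg z
    rw [Multiset.count_bind, Multiset.map_congr rfl key, ← Multiset.count_bind]
    rfl
  -- part B as a map
  have hBmapE : B.bind (fun e => ({e.1, e.2} : Multiset (G₁ × G₂)))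
      = (starterElems S₂).map ι := by
    rw [hB, Multiset.bind_map, starterElems, Multiset.map_bind]
    congr 1
  have hBmapD : B.bind (fun e => ({e.1 - e.2, e.2 - e.1} : Multiset (G₁ × G₂)))
      = (starterDiffs S₂).map ι := by
    rw [hB, Multiset.bind_map, starterDiffs, Multiset.map_bind]
    congr 1
  have hcountι : ∀ (E : Multiset (H × G₂)) (z : G₁ × G₂),
      (E.map ι).count z = if h : z.1 ∈ H then E.count (⟨z.1, h⟩, z.2) else 0 := by
    intro E z
    split_ifs with h
    · have hz : z = ι (⟨z.1, h⟩, z.2) := rfl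
      conv_lhs => rw [hz]
      exact Multiset.count_map_eq_count' ι E ιinj _
    · rw [Multiset.count_eq_zero]
      intro hm
      obtain ⟨w, _, hw⟩ := Multiset.mem_map.mp hm
      apply h
      rw [← hw]
      exact w.1.2
  -- combined counts
  have hME : ∀ z : G₁ × G₂, (M.bind fun e => ({e.1, e.2} : Multiset (G₁ × G₂))).count z
      = if z ∈ H.prod (⊥ : AddSubgroup G₂) then 0 else 1 := by
    intro z
    rw [hM, Multiset.add_bind, Multiset.count_add, hAE z, hBmapE, hcountι, h₁e z.1]
    by_cases h1 : z.1 ∈ H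
    · rw [if_pos h1, zero_add]
      have hz2 : (((⟨z.1, h1⟩ : H), z.2) : H × G₂) ∈
          (⊤ : AddSubgroup H).prod (⊥ : AddSubgroup G₂) ↔
          z ∈ H.prod (⊥ : AddSubgroup G₂) := by
        simp [AddSubgroup.mem_prod, h1]
      have hc := h₂e ((⟨z.1, h1⟩ : H), z.2)
      rw [hz2] at hc
      rw [dif_pos h1]
      convert hc using 2
    · rw [if_neg h1, dif_neg h1,
        if_neg (fun c => h1 ((AddSubgroup.mem_prod.mp c).1))]
  have hMD : ∀ z : G₁ × G₂, (M.bind fun e => ({e.1 - e.2, e.2 - e.1} : Multiset (G₁ × G₂))).count z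
      = if z ∈ H.prod (⊥ : AddSubgroup G₂) then 0 else 1 := by
    intro z
    rw [hM, Multiset.add_bind, Multiset.count_add, hAD z, hBmapD, hcountι, h₁d z.1]
    by_cases h1 : z.1 ∈ H
    · rw [if_pos h1, zero_add]
      have hz2 : (((⟨z.1, h1⟩ : H), z.2) : H × G₂) ∈
          (⊤ : AddSubgroup H).prod (⊥ : AddSubgroup G₂) ↔
          z ∈ H.prod (⊥ : AddSubgroup G₂) := by
        simp [AddSubgroup.mem_prod, h1]
      have hc := h₂d ((⟨z.1, h1⟩ : H), z.2)
      rw [hz2] at hc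
      rw [dif_pos h1]
      convert hc using 2
    · rw [if_neg h1, dif_neg h1,
        if_neg (fun c => h1 ((AddSubgroup.mem_prod.mp c).1))]
  -- nodup
  have hMnodup : M.Nodup := by
    rw [Multiset.nodup_iff_count_le_one]
    intro e
    have h1 : M.count e ≤ (M.map Prod.fst).count e.1 := by
      rw [Multiset.count_map, Multiset.count_eq_card_filter_eq]
      apply Multiset.card_le_card
      apply Multiset.monotone_filter_right
      intro b hb
      rw [← hb]
    have h2 : (M.map Prod.fst).count e.1
        ≤ (M.bind fun p => ({p.1, p.2} : Multiset (G₁ × G₂))).count e.1 := by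
      have hsp : (M.bind fun p => ({p.1, p.2} : Multiset (G₁ × G₂)))
          = M.map Prod.fst + M.map Prod.snd := by
        rw [show (fun p : (G₁ × G₂) × (G₁ × G₂) => ({p.1, p.2} : Multiset (G₁ × G₂)))
            = fun p => ({p.1} : Multiset (G₁ × G₂)) + {p.2} from rfl,
          Multiset.bind_add, Multiset.bind_singleton, Multiset.bind_singleton]
      rw [hsp, Multiset.count_add]
      exact Nat.le_add_right _ _
    have h3 : (M.bind fun p => ({p.1, p.2} : Multiset (G₁ × G₂))).count e.1 ≤ 1 := by
      rw [hME e.1]; split_ifs <;> omega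
    omega
  have hS₁notH : ∀ p ∈ S₁, p.1 + p.2 ∉ H := h₁sH
  refine ⟨⟨M, hMnodup⟩, ⟨⟨fun z => by (convert hME z using 2; rfl), fun z => by (convert hMD z using 2; rfl)⟩, ?_, ?_⟩⟩
  · -- sums avoid H.prod ⊥
    intro p hp
    rcases Multiset.mem_add.mp hp with hAm | hBm
    · obtain ⟨q, hq, hmap⟩ := Multiset.mem_bind.mp hAm
      obtain ⟨a, _, ha⟩ := Multiset.mem_map.mp hmap
      intro hmem
      apply h₁sH q hq
      have hfst : p.1.1 + p.2.1 ∈ H := (AddSubgroup.mem_prod.mp hmem).1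
      rw [← ha] at hfst
      exact hfst
    · obtain ⟨w, hw, hmap⟩ := Multiset.mem_map.mp hBm
      intro hmem
      apply h₂sH w hw
      have h2' : p.1.2 + p.2.2 ∈ (⊥ : AddSubgroup G₂) := (AddSubgroup.mem_prod.mp hmem).2
      rw [← hmap] at h2'
      exact AddSubgroup.mem_prod.mpr ⟨trivial, h2'⟩
  · -- sums pairwise distinct
    intro p hp q hq hsum
    rcases Multiset.mem_add.mp hp with hAm | hBm <;>
      rcases Multiset.mem_add.mp hq with hAm' | hBm'
    · obtain ⟨u, hu, hmap⟩ := Multiset.mem_bind.mp hAm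
      obtain ⟨a, _, ha⟩ := Multiset.mem_map.mp hmap
      obtain ⟨v, hv, hmap'⟩ := Multiset.mem_bind.mp hAm'
      obtain ⟨b, _, hb⟩ := Multiset.mem_map.mp hmap'
      subst ha; subst hb
      have h1 : u.1 + u.2 = v.1 + v.2 := congrArg Prod.fst hsum
      have h2 : φ a + a = φ b + b := congrArg Prod.snd hsum
      have huv : u = v := h₁inj u hu v hv h1
      have hab : a = b := hφs.injective h2
      rw [huv, hab]
    · obtain ⟨u, hu, hmap⟩ := Multiset.mem_bind.mp hAm
      obtain ⟨a, _, ha⟩ := Multiset.mem_map.mp hmap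
      obtain ⟨w, hw, hmap'⟩ := Multiset.mem_map.mp hBm'
      subst ha; subst hmap'
      exfalso
      apply h₁sH u hu
      have h1 : u.1 + u.2 = (w.1.1 : G₁) + w.2.1 := congrArg Prod.fst hsum
      rw [h1]
      exact add_mem w.1.1.2 w.2.1.2
    · obtain ⟨w, hw, hmap⟩ := Multiset.mem_map.mp hBm
      obtain ⟨u, hu, hmap'⟩ := Multiset.mem_bind.mp hAm'
      obtain ⟨a, _, ha⟩ := Multiset.mem_map.mp hmap'
      subst hmap; subst ha
      exfalso
      apply h₁sH u hu
      have h1 : (w.1.1 : G₁) + w.2.1 = u.1 + u.2 := congrArg Prod.fst hsum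
      rw [← h1]
      exact add_mem w.1.1.2 w.2.1.2
    · obtain ⟨w, hw, hmap⟩ := Multiset.mem_map.mp hBm
      obtain ⟨w', hw', hmap'⟩ := Multiset.mem_map.mp hBm'
      subst hmap; subst hmap'
      have h1 : ι (w.1 + w.2) = ι (w'.1 + w'.2) := hsum
      have h2 : w.1 + w.2 = w'.1 + w'.2 := ιinj h1
      rw [h₂inj w hw w' hw' h2]
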